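/- Let γ_k : ℝ → ℂ be arbitrary functions for −(N−1) ≤ k ≤ N−1, and let 𝓝_Γ be the band operator on H_N defined by 𝓝_Γψ^N_n := Σ_{k : 0 ≤ n+k ≤ N−1} γ_k(nℏ)·ψ^N_{n+k}. Then for every z ∈ ℂ∖{0}: 𝓝_Γψ^a_z = Σ_{n=0}^{N−1} c_n(z)·conj(φ_n(z))·φ_n, where c_n(z) = Σ_{k=n−N+1}^{n} conj(z)^(−k)·m_k(n)·√(C^N_n/C^N_{n−k})·γ_k((n−k)ℏ)·ã(τ(z)/ℏ − (n−k)), with m_k(n) := μ_k(n) for k ≥ 1, m_0(n) := 1, and m_k(n) := ν_{−k}(n) for k ≤ −1. (Thus 𝓝_Γψ^a_z is again of the form ψ^{b_z}_z: the content of Proposition 3.8.) -/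

import Mathlib

open MeasureTheory Complex Real

noncomputable section

/-- The measure `dμ_N(z) = (1/π)·(1+|z|²)^{-(N+1)} dA(z)` on `ℂ`. -/
def muN (N : ℕ) : Measure ℂ :=
  volume.withDensity (fun z => ENNReal.ofReal (1 / (Real.pi * (1 + ‖z‖ ^ 2) ^ (N + 1))))

/-- The basis vectors `φ_n(z) = √(N!/(n!(N−1−n)!))·zⁿ`. -/
def phiN (N n : ℕ) : ℂ → ℂ :=
  fun z => (Real.sqrt ((N.factorial : ℝ) / (n.factorial * (N - 1 - n).factorial)) : ℂ) * z ^ n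

/-- The coherent state `ρ_{z₀}(z) = N·(1+conj(z₀)·z)^{N−1}`. -/
def rhoN (N : ℕ) (z₀ : ℂ) : ℂ → ℂ :=
  fun z => (N : ℂ) * (1 + (starRingEnd ℂ) z₀ * z) ^ (N - 1)

/-- The inner product `⟨P,Q⟩ = ∫ P(z) conj(Q(z)) dμ_N(z)`, linear in the first argument. -/
def hermN (N : ℕ) (P Q : ℂ → ℂ) : ℂ :=
  ∫ z, P z * (starRingEnd ℂ) (Q z) ∂(muN N)

/-- The Fourier transform `ã(y) = (2π)^{-1/2} ∫ e^{ixy} a(x) dx`. -/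
def tildeF (a : ℝ → ℂ) (y : ℝ) : ℂ :=
  (Real.sqrt (2 * Real.pi))⁻¹ * ∫ x : ℝ, Complex.exp (Complex.I * x * y) * a x

/-- `τ(z) = |z|²/(1+|z|²)`. -/
def tauS (z : ℂ) : ℝ := ‖z‖ ^ 2 / (1 + ‖z‖ ^ 2)

/-- The building vector `ψ^a_z = ∫ a(t)·e^{iτ(z)t/ℏ}·ρ_{e^{it}z} dt/√(2π)`. -/
def psiA (N : ℕ) (ℏ : ℝ) (a : ℝ → ℂ) (z : ℂ) : ℂ → ℂ :=
  fun w => ∫ t : ℝ, a t * Complex.exp (Complex.I * (tauS z) * t / (ℏ : ℂ)) *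
    rhoN N (Complex.exp (Complex.I * t) * z) w / (Real.sqrt (2 * Real.pi) : ℂ)

/-- `C^N_n = N·binom(N−1,n)·∫₀¹ |ã((τ−nℏ)/ℏ)|²·(τ/(1−τ))ⁿ·(1−τ)^{N−1} dτ`. -/
def CNn (N : ℕ) (ℏ : ℝ) (a : ℝ → ℂ) (n : ℕ) : ℝ :=
  N * ((N - 1).choose n) *
    ∫ τ in (0:ℝ)..1, ‖tildeF a ((τ - n * ℏ) / ℏ)‖ ^ 2 * (τ / (1 - τ)) ^ n * (1 - τ) ^ (N - 1)

/-- The normalized vectors `ψ^N_n = √(C^N_n)·φ_n`. -/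
def psiNn (N : ℕ) (ℏ : ℝ) (a : ℝ → ℂ) (n : ℕ) : ℂ → ℂ :=
  fun z => (Real.sqrt (CNn N ℏ a n) : ℂ) * phiN N n z

/-- `μ_k(n) = √(binom(n,k)/binom(N−1−n+k,k))` for `k ≤ n ≤ N−1`, and `0` otherwise. -/
def mukF (N k n : ℕ) : ℝ :=
  if k ≤ n ∧ n ≤ N - 1 then Real.sqrt ((n.choose k : ℝ) / ((N - 1 - n + k).choose k : ℝ))
  else 0

/-- `ν_k(n) = √(binom(N−1−n,k)/binom(n+k,k))` for `0 ≤ n ≤ N−1−k`, and `0` otherwise. -/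
def nukF (N k n : ℕ) : ℝ :=
  if n ≤ N - 1 - k then Real.sqrt (((N - 1 - n).choose k : ℝ) / ((n + k).choose k : ℝ))
  else 0

/-- `m_k(n)`: equal to `μ_k(n)` for `k ≥ 1`, to `1` for `k = 0`, and to `ν_{−k}(n)` for
`k ≤ −1`. -/
def mkF (N : ℕ) (k : ℤ) (n : ℕ) : ℝ :=
  if 0 < k then mukF N k.toNat n else if k = 0 then 1 else nukF N (-k).toNat n

private def rr (N n : ℕ) : ℝ := (N.factorial : ℝ) / (n.factorial * (N - 1 - n).factorial)

private lemma rr_pos (N n : ℕ) : 0 < rr N n := by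
  apply div_pos
  · exact_mod_cast N.factorial_pos
  · have h1 : (0:ℝ) < n.factorial := by exact_mod_cast n.factorial_pos
    have h2 : (0:ℝ) < (N - 1 - n).factorial := by exact_mod_cast (N - 1 - n).factorial_pos
    exact mul_pos h1 h2

private lemma choose_ratio (N n m k' : ℕ) (hm : m ≤ N - 1) (hnm : n + k' = m) :
    ((m.choose k' : ℕ) : ℝ) / (((N - 1 - m + k').choose k' : ℕ) : ℝ) = rr N n / rr N m := by
  have h1 : m.choose k' * k'.factorial * (m - k').factorial = m.factorial :=
    Nat.choose_mul_factorial_mul_factorial (by omega)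
  have hmk : m - k' = n := by omega
  have he : N - 1 - m + k' = N - 1 - n := by omega
  have h2 : (N - 1 - n).choose k' * k'.factorial * (N - 1 - n - k').factorial
      = (N - 1 - n).factorial := Nat.choose_mul_factorial_mul_factorial (by omega)
  have he2 : N - 1 - n - k' = N - 1 - m := by omega
  rw [hmk] at h1
  rw [he2] at h2
  rw [he, rr, rr]
  have hc2pos : 0 < (N - 1 - n).choose k' := Nat.choose_pos (by omega)
  have f0 : (k'.factorial : ℝ) ≠ 0 := by exact_mod_cast k'.factorial_pos.ne'
  have hc1 : (m.choose k' : ℝ) = (m.factorial : ℝ) / (k'.factorial * n.factorial) := by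
    rw [eq_div_iff (by positivity)]
    rw [← mul_assoc]
    exact_mod_cast congrArg (Nat.cast (R := ℝ)) h1
  have hc2 : ((N - 1 - n).choose k' : ℝ)
      = ((N - 1 - n).factorial : ℝ) / (k'.factorial * (N - 1 - m).factorial) := by
    rw [eq_div_iff (by positivity)]
    rw [← mul_assoc]
    exact_mod_cast congrArg (Nat.cast (R := ℝ)) h2
  rw [hc1, hc2]
  have g0 : (N.factorial : ℝ) ≠ 0 := by exact_mod_cast N.factorial_pos.ne'
  have g1 : (n.factorial : ℝ) ≠ 0 := by exact_mod_cast n.factorial_pos.ne'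
  have g2 : (m.factorial : ℝ) ≠ 0 := by exact_mod_cast m.factorial_pos.ne'
  have g3 : ((N - 1 - n).factorial : ℝ) ≠ 0 := by exact_mod_cast (N-1-n).factorial_pos.ne'
  have g4 : ((N - 1 - m).factorial : ℝ) ≠ 0 := by exact_mod_cast (N-1-m).factorial_pos.ne'
  field_simp

private lemma choose_ratio' (N n m j : ℕ) (hn : n ≤ N - 1) (hnm : m + j = n) :
    (((N - 1 - m).choose j : ℕ) : ℝ) / (((m + j).choose j : ℕ) : ℝ) = rr N n / rr N m := by
  have h1 : (N - 1 - m).choose j * j.factorial * (N - 1 - m - j).factorial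
      = (N - 1 - m).factorial := Nat.choose_mul_factorial_mul_factorial (by omega)
  have he : N - 1 - m - j = N - 1 - n := by omega
  rw [he] at h1
  have h2 : n.choose j * j.factorial * (n - j).factorial = n.factorial :=
    Nat.choose_mul_factorial_mul_factorial (by omega)
  have hmk : n - j = m := by omega
  rw [hmk] at h2
  rw [hnm, rr, rr]
  have f0 : (j.factorial : ℝ) ≠ 0 := by exact_mod_cast j.factorial_pos.ne'
  have hc1 : ((N - 1 - m).choose j : ℝ)
      = ((N - 1 - m).factorial : ℝ) / (j.factorial * (N - 1 - n).factorial) := by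
    rw [eq_div_iff (by positivity)]
    rw [← mul_assoc]
    exact_mod_cast congrArg (Nat.cast (R := ℝ)) h1
  have hc2 : (n.choose j : ℝ) = (n.factorial : ℝ) / (j.factorial * m.factorial) := by
    rw [eq_div_iff (by positivity)]
    rw [← mul_assoc]
    exact_mod_cast congrArg (Nat.cast (R := ℝ)) h2
  rw [hc1, hc2]
  have g0 : (N.factorial : ℝ) ≠ 0 := by exact_mod_cast N.factorial_pos.ne'
  have g1 : (n.factorial : ℝ) ≠ 0 := by exact_mod_cast n.factorial_pos.ne'
  have g2 : (m.factorial : ℝ) ≠ 0 := by exact_mod_cast m.factorial_pos.ne'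
  have g3 : ((N - 1 - n).factorial : ℝ) ≠ 0 := by exact_mod_cast (N-1-n).factorial_pos.ne'
  have g4 : ((N - 1 - m).factorial : ℝ) ≠ 0 := by exact_mod_cast (N-1-m).factorial_pos.ne'
  field_simp

/-- definitions copied from statement file for testing -/

private lemma mkF_mul (N : ℕ) (k : ℤ) (n m : ℕ)
    (hn : n ≤ N - 1) (hm : m ≤ N - 1) (hk : (m : ℤ) = (n : ℤ) + k) :
    (mkF N k m : ℝ) * Real.sqrt (rr N m) = Real.sqrt (rr N n) := by
  have hrm : 0 < rr N m := rr_pos N m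
  have hrn : 0 < rr N n := rr_pos N n
  have main : mkF N k m = Real.sqrt (rr N n / rr N m) := by
    rcases lt_trichotomy k 0 with hk0 | hk0 | hk0
    · rw [mkF, if_neg (by omega), if_neg (by omega), nukF, if_pos (by omega)]
      have : m + (-k).toNat = n := by omega
      rw [choose_ratio' N n m (-k).toNat hn this]
    · subst hk0
      have hmn : m = n := by omega
      subst hmn
      simp [mkF, div_self hrm.ne', Real.sqrt_one]
    · rw [mkF, if_pos hk0, mukF, if_pos ⟨by omega, hm⟩]
      have : n + k.toNat = m := by omega
      rw [choose_ratio N n m k.toNat hm this]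
  rw [main, Real.sqrt_div hrn.le, div_mul_cancel₀]
  exact (Real.sqrt_pos.2 hrm).ne'

private lemma exp_norm_one (t y : ℝ) : ‖Complex.exp (Complex.I * t * y)‖ = 1 := by
  rw [Complex.norm_exp]
  have : (Complex.I * t * y).re = 0 := by simp
  rw [this, Real.exp_zero]

private lemma integ_aux (a : SchwartzMap ℝ ℂ) (y : ℝ) :
    Integrable (fun t : ℝ => Complex.exp (Complex.I * t * y) * a t) := by
  refine a.integrable.bdd_mul ?_ (Filter.Eventually.of_forall fun t => le_of_eq (exp_norm_one t y))
  exact (Continuous.aestronglyMeasurable (by continuity))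

private lemma sqrt2pi_ne : ((Real.sqrt (2 * Real.pi) : ℝ) : ℂ) ≠ 0 := by
  simp only [ne_eq, Complex.ofReal_eq_zero]
  exact Real.sqrt_ne_zero'.mpr (by positivity)

private lemma int_eq (a : SchwartzMap ℝ ℂ) (y : ℝ) :
    ∫ x : ℝ, Complex.exp (Complex.I * x * y) * a x
      = (Real.sqrt (2 * Real.pi) : ℂ) * tildeF (⇑a) y := by
  rw [tildeF, Complex.ofReal_inv, ← mul_assoc, mul_inv_cancel₀ sqrt2pi_ne, one_mul]

private lemma psiA_expand (N : ℕ) (hN : 1 ≤ N) (ℏ : ℝ) (hℏ : 0 < ℏ) (a : SchwartzMap ℝ ℂ)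
    (z : ℂ) (w : ℂ) :
    psiA N ℏ (⇑a) z w = ∑ n ∈ Finset.range N,
      (N : ℂ) * (((N - 1).choose n : ℕ) : ℂ) * ((starRingEnd ℂ) z * w) ^ n
        * tildeF (⇑a) (tauS z / ℏ - n) := by
  have hℏ' : (ℏ : ℂ) ≠ 0 := by exact_mod_cast hℏ.ne'
  have key : ∀ t : ℝ, (⇑a) t * Complex.exp (Complex.I * (tauS z) * t / (ℏ : ℂ)) *
      rhoN N (Complex.exp (Complex.I * t) * z) w / (Real.sqrt (2 * Real.pi) : ℂ)
      = ∑ n ∈ Finset.range N,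
        ((N : ℂ) * (((N - 1).choose n : ℕ) : ℂ) * ((starRingEnd ℂ) z * w) ^ n
            / (Real.sqrt (2 * Real.pi) : ℂ))
          * (Complex.exp (Complex.I * (t : ℂ) * ((tauS z / ℏ - n : ℝ) : ℂ)) * a t) := by
    intro t
    have hconj : (starRingEnd ℂ) (Complex.exp (Complex.I * t) * z)
        = Complex.exp (-(Complex.I * t)) * (starRingEnd ℂ) z := by
      rw [map_mul, ← Complex.exp_conj]
      congr 2
      simp [Complex.conj_I]
    have expand : (1 + Complex.exp (-(Complex.I * t)) * (starRingEnd ℂ) z * w) ^ (N - 1)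
        = ∑ n ∈ Finset.range N, Complex.exp (-(Complex.I * t)) ^ n
            * ((starRingEnd ℂ) z * w) ^ n * (((N - 1).choose n : ℕ) : ℂ) := by
      have h := add_pow (Complex.exp (-(Complex.I * t)) * ((starRingEnd ℂ) z * w)) 1 (N - 1)
      rw [Nat.sub_add_cancel hN] at h
      rw [add_comm, mul_assoc, h]
      refine Finset.sum_congr rfl fun n _ => ?_
      rw [one_pow, mul_one, mul_pow]
    simp only [rhoN]
    rw [hconj, expand, Finset.mul_sum, Finset.mul_sum, Finset.sum_div]
    refine Finset.sum_congr rfl fun n _ => ?_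
    have hexp : Complex.exp (Complex.I * (tauS z) * t / (ℏ : ℂ))
          * Complex.exp (-(Complex.I * t)) ^ n
        = Complex.exp (Complex.I * (t : ℂ) * ((tauS z / ℏ - n : ℝ) : ℂ)) := by
      rw [← Complex.exp_nat_mul, ← Complex.exp_add]
      congr 1
      push_cast
      field_simp
      ring
    rw [← hexp]
    ring
  simp only [psiA]
  simp only [key]
  rw [integral_finset_sum _ (fun n _ => ((integ_aux a _).const_mul _))]
  refine Finset.sum_congr rfl fun n _ => ?_
  rw [MeasureTheory.integral_const_mul, int_eq]
  have h2 : ((Real.sqrt 2 : ℝ) : ℂ) ≠ 0 := by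
    simp only [ne_eq, Complex.ofReal_eq_zero]
    exact Real.sqrt_ne_zero'.mpr (by norm_num)
  have hp : ((Real.sqrt Real.pi : ℝ) : ℂ) ≠ 0 := by
    simp only [ne_eq, Complex.ofReal_eq_zero]
    exact Real.sqrt_ne_zero'.mpr Real.pi_pos
  field_simp

private lemma rcoef (N n : ℕ) (h1 : 1 ≤ N) (hn : n ≤ N - 1) :
    (N : ℝ) * (((N - 1).choose n : ℕ) : ℝ) = rr N n := by
  have h2 : (N - 1).choose n * n.factorial * (N - 1 - n).factorial = (N - 1).factorial :=
    Nat.choose_mul_factorial_mul_factorial hn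
  have h3 : N * (N - 1).factorial = N.factorial := by
    cases N with
    | zero => omega
    | succ M => simp [Nat.factorial_succ]
  have key : N * ((N - 1).choose n) * (n.factorial * (N - 1 - n).factorial) = N.factorial := by
    calc N * ((N - 1).choose n) * (n.factorial * (N - 1 - n).factorial)
        = N * ((N - 1).choose n * n.factorial * (N - 1 - n).factorial) := by ring
      _ = N * (N - 1).factorial := by rw [h2]
      _ = N.factorial := h3
  have hne : ((n.factorial : ℝ) * ((N - 1 - n).factorial : ℝ)) ≠ 0 := by
    have g1 : (n.factorial : ℝ) ≠ 0 := by exact_mod_cast n.factorial_pos.ne'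
    have g2 : ((N - 1 - n).factorial : ℝ) ≠ 0 := by exact_mod_cast (N - 1 - n).factorial_pos.ne'
    exact mul_ne_zero g1 g2
  rw [rr, eq_div_iff hne]
  exact_mod_cast congrArg (Nat.cast (R := ℝ)) key

/-- Proposition 3.8: for the band operator
`𝓝_Γ ψ^N_n = Σ_{k : 0 ≤ n+k ≤ N−1} γ_k(nℏ)·ψ^N_{n+k}`, one has, for `z ≠ 0`,
`𝓝_Γ ψ^a_z = Σ_{n=0}^{N−1} c_n(z)·conj(φ_n(z))·φ_n` with
`c_n(z) = Σ_{k=n−N+1}^{n} conj(z)^{−k}·m_k(n)·√(C^N_n/C^N_{n−k})·γ_k((n−k)ℏ)·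
           ã(τ(z)/ℏ−(n−k))`. -/
theorem stmt10 (N : ℕ) (hN : 1 ≤ N) (ℏ : ℝ) (hℏ : 0 < ℏ) (a : SchwartzMap ℝ ℂ)
    (hC : ∀ n : ℕ, n ≤ N - 1 → 0 < CNn N ℏ (⇑a) n)
    (γ : ℤ → ℝ → ℂ)
    (T : (ℂ → ℂ) →ₗ[ℂ] (ℂ → ℂ))
    (hT : ∀ n : ℕ, n ≤ N - 1 →
      T (psiNn N ℏ (⇑a) n)
        = ∑ k ∈ (Finset.Icc (-(N : ℤ) + 1) ((N : ℤ) - 1)).filter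
            (fun k => 0 ≤ (n : ℤ) + k ∧ (n : ℤ) + k ≤ (N : ℤ) - 1),
            γ k ((n : ℝ) * ℏ) • psiNn N ℏ (⇑a) ((n : ℤ) + k).toNat)
    (z : ℂ) (hz : z ≠ 0) :
    T (psiA N ℏ (⇑a) z) = fun w => ∑ n ∈ Finset.range N,
      (∑ k ∈ Finset.Icc ((n : ℤ) - N + 1) (n : ℤ),
        ((starRingEnd ℂ) z) ^ (-k)
          * ((mkF N k n : ℝ) : ℂ)
          * (Real.sqrt (CNn N ℏ (⇑a) n / CNn N ℏ (⇑a) ((n : ℤ) - k).toNat) : ℂ)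
          * γ k ((((n : ℤ) - k : ℤ) : ℝ) * ℏ)
          * tildeF (⇑a) (tauS z / ℏ - (((n : ℤ) - k : ℤ) : ℝ)))
      * (starRingEnd ℂ) (phiN N n z) * phiN N n w := by
  classical
  have hsub : ∀ n : ℕ, n ∈ Finset.range N → n ≤ N - 1 := fun n hn => by
    simp only [Finset.mem_range] at hn; omega
  set cz := (starRingEnd ℂ) z with hcz
  have hcz0 : cz ≠ 0 := by simpa [hcz] using hz
  -- coefficient of psiA in the psiNn basis
  set b : ℕ → ℂ := fun n =>
    ((N : ℂ) * (((N - 1).choose n : ℕ) : ℂ) * cz ^ n * tildeF (⇑a) (tauS z / ℏ - n))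
      / ((Real.sqrt (CNn N ℏ (⇑a) n) : ℂ) * (Real.sqrt (rr N n) : ℂ)) with hb
  have hpsiA : psiA N ℏ (⇑a) z = ∑ n ∈ Finset.range N, b n • psiNn N ℏ (⇑a) n := by
    funext w
    rw [psiA_expand N hN ℏ hℏ a z w, Finset.sum_apply]
    refine Finset.sum_congr rfl fun n hn => ?_
    have hCz : ((Real.sqrt (CNn N ℏ (⇑a) n) : ℝ) : ℂ) ≠ 0 := by
      simp only [ne_eq, Complex.ofReal_eq_zero]
      exact (Real.sqrt_pos.2 (hC n (hsub n hn))).ne'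
    have hrz : ((Real.sqrt (rr N n) : ℝ) : ℂ) ≠ 0 := by
      simp only [ne_eq, Complex.ofReal_eq_zero]
      exact (Real.sqrt_pos.2 (rr_pos N n)).ne'
    simp only [Pi.smul_apply, smul_eq_mul, psiNn, phiN, hb, ← hcz]
    rw [mul_pow]
    rw [show Real.sqrt ((N.factorial : ℝ) / (n.factorial * (N - 1 - n).factorial))
        = Real.sqrt (rr N n) from rfl]
    field_simp
  have hTpsiA : T (psiA N ℏ (⇑a) z)
      = ∑ n ∈ Finset.range N,
          ∑ k ∈ (Finset.Icc (-(N : ℤ) + 1) ((N : ℤ) - 1)).filter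
            (fun k => 0 ≤ (n : ℤ) + k ∧ (n : ℤ) + k ≤ (N : ℤ) - 1),
            (b n * γ k ((n : ℝ) * ℏ)) • psiNn N ℏ (⇑a) ((n : ℤ) + k).toNat := by
    rw [hpsiA, map_sum]
    refine Finset.sum_congr rfl fun n hn => ?_
    rw [_root_.map_smul, hT n (hsub n hn), Finset.smul_sum]
    refine Finset.sum_congr rfl fun k hk => ?_
    rw [smul_smul]
  rw [hTpsiA]
  funext w
  simp only [Finset.sum_apply, Pi.smul_apply, smul_eq_mul]
  simp only [Finset.sum_mul]
  rw [Finset.sum_sigma', Finset.sum_sigma']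
  refine Finset.sum_nbij' (fun p => ⟨((p.1 : ℤ) + p.2).toNat, p.2⟩)
    (fun p => ⟨((p.1 : ℤ) - p.2).toNat, p.2⟩) ?_ ?_ ?_ ?_ ?_
  · rintro ⟨n, k⟩ hp
    simp only [Finset.mem_sigma, Finset.mem_range, Finset.mem_filter, Finset.mem_Icc] at hp ⊢
    omega
  · rintro ⟨m, k⟩ hp
    simp only [Finset.mem_sigma, Finset.mem_range, Finset.mem_filter, Finset.mem_Icc] at hp ⊢
    omega
  · rintro ⟨n, k⟩ hp
    simp only [Finset.mem_sigma, Finset.mem_range, Finset.mem_filter, Finset.mem_Icc] at hp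
    simp only [Sigma.mk.inj_iff, heq_eq_eq, and_true]
    omega
  · rintro ⟨m, k⟩ hp
    simp only [Finset.mem_sigma, Finset.mem_range, Finset.mem_filter, Finset.mem_Icc] at hp
    simp only [Sigma.mk.inj_iff, heq_eq_eq, and_true]
    omega
  · rintro ⟨n, k⟩ hp
    simp only [Finset.mem_sigma, Finset.mem_range, Finset.mem_filter, Finset.mem_Icc] at hp
    obtain ⟨hnN, ⟨hk1, hk2⟩, hnk1, hnk2⟩ := hp
    obtain ⟨m, hm1⟩ : ∃ m : ℕ, (m : ℤ) = (n : ℤ) + k := ⟨((n : ℤ) + k).toNat, by omega⟩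
    have hidx : ((n : ℤ) + k).toNat = m := by omega
    have hmn : ((m : ℤ) - k).toNat = n := by omega
    have hnle : n ≤ N - 1 := by omega
    have hmle : m ≤ N - 1 := by omega
    have hcastr : ((((m : ℤ) - k : ℤ)) : ℝ) = (n : ℝ) := by
      have : (m : ℤ) - k = (n : ℤ) := by omega
      rw [this]; exact_mod_cast rfl
    simp only [hidx, psiNn, phiN, hb, hmn, hcastr]
    simp only [map_mul, map_pow, Complex.conj_ofReal, ← hcz]
    -- key identities
    have e1 : ((N : ℂ) * (((N - 1).choose n : ℕ) : ℂ))
        = ((Real.sqrt (rr N n) : ℝ) : ℂ) * ((Real.sqrt (rr N n) : ℝ) : ℂ) := by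
      rw [← Complex.ofReal_mul, Real.mul_self_sqrt (rr_pos N n).le, ← rcoef N n hN hnle]
      push_cast; ring
    have e2 : ((mkF N k m : ℝ) : ℂ) * ((Real.sqrt (rr N m) : ℝ) : ℂ)
        = ((Real.sqrt (rr N n) : ℝ) : ℂ) := by
      rw [← Complex.ofReal_mul, mkF_mul N k n m hnle hmle hm1]
    have e3 : ((Real.sqrt (CNn N ℏ (⇑a) m / CNn N ℏ (⇑a) n) : ℝ) : ℂ)
        = ((Real.sqrt (CNn N ℏ (⇑a) m) : ℝ) : ℂ) / ((Real.sqrt (CNn N ℏ (⇑a) n) : ℝ) : ℂ) := by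
      rw [Real.sqrt_div (hC m hmle).le, Complex.ofReal_div]
    have e4 : cz ^ (-k) * cz ^ (m : ℕ) = cz ^ (n : ℕ) := by
      rw [← zpow_natCast cz m, ← zpow_natCast cz n, ← zpow_add₀ hcz0]
      congr 1; omega
    have hCnz : ((Real.sqrt (CNn N ℏ (⇑a) n) : ℝ) : ℂ) ≠ 0 := by
      simp only [ne_eq, Complex.ofReal_eq_zero]
      exact (Real.sqrt_pos.2 (hC n hnle)).ne'
    have hrnz : ((Real.sqrt (rr N n) : ℝ) : ℂ) ≠ 0 := by
      simp only [ne_eq, Complex.ofReal_eq_zero]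
      exact (Real.sqrt_pos.2 (rr_pos N n)).ne'
    have hrmz : ((Real.sqrt (rr N m) : ℝ) : ℂ) ≠ 0 := by
      simp only [ne_eq, Complex.ofReal_eq_zero]
      exact (Real.sqrt_pos.2 (rr_pos N m)).ne'
    rw [show Real.sqrt ((N.factorial : ℝ) / (m.factorial * (N - 1 - m).factorial))
        = Real.sqrt (rr N m) from rfl]
    have hczm : cz ^ (m : ℕ) ≠ 0 := pow_ne_zero _ hcz0
    have e2' : ((mkF N k m : ℝ) : ℂ)
        = ((Real.sqrt (rr N n) : ℝ) : ℂ) / ((Real.sqrt (rr N m) : ℝ) : ℂ) := by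
      rw [eq_div_iff hrmz]; exact e2
    have e4' : cz ^ (-k) = cz ^ (n : ℕ) / cz ^ (m : ℕ) := by
      rw [eq_div_iff hczm]; exact e4
    rw [e3, e1, e2', e4']
    field_simp
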